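/- The infinite binary word w = 01 0 0101 0 (01)⁴ 0 (01)⁸ 0 … 0 (01)^{2^n} 0 … has letter frequencies ρ₀ = ρ₁ = 1/2 (the limits of |pref_n(w)|₀/n and |pref_n(w)|₁/n both equal 1/2), but w is not weakly abelian periodic. -/

import Mathlib

open Filter Topology

/-- Number of 1's (`true`) in the length-`n` prefix of the infinite binary word `w`. -/
def ones (w : ℕ → Bool) (n : ℕ) : ℕ :=
  ((Finset.range n).filter (fun i => w i = true)).card

/-- Number of 0's (`false`) in the length-`n` prefix of `w`. -/
def zeros (w : ℕ → Bool) (n : ℕ) : ℕ := n - ones w n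

/-- The graphic of `w`: `g_w(n) = |pref_n(w)|₁ - |pref_n(w)|₀`. -/
def graphic (w : ℕ → Bool) (n : ℕ) : ℤ := (ones w n : ℤ) - (zeros w n : ℤ)

/-- `w` is weakly abelian periodic with frequency `ρ` of the letter 1 in the blocks:
there is a factorization `w = v₀v₁v₂⋯` (cut points `k 0 < k 1 < ⋯`, with `v₀` the
prefix of length `k 0`) such that each block `vᵢ = w[k i, k (i+1))`, `i ≥ 1`,
has frequency `ρ` of the letter 1. -/
def WAPwith (w : ℕ → Bool) (ρ : ℚ) : Prop :=
  ∃ k : ℕ → ℕ, StrictMono k ∧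
    ∀ i : ℕ, ((ones w (k (i+1)) : ℚ) - (ones w (k i) : ℚ))
      = ρ * ((k (i+1) : ℚ) - (k i : ℚ))

/-- `w` is weakly abelian periodic. -/
def WAP (w : ℕ → Bool) : Prop := ∃ ρ : ℚ, WAPwith w ρ

/-- `w` is bounded weakly abelian periodic: WAP with blocks of uniformly bounded length. -/
def BoundedWAP (w : ℕ → Bool) : Prop :=
  ∃ (ρ : ℚ) (k : ℕ → ℕ) (C : ℕ), StrictMono k ∧ (∀ i, k (i+1) - k i ≤ C) ∧
    ∀ i : ℕ, ((ones w (k (i+1)) : ℚ) - (ones w (k i) : ℚ))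
      = ρ * ((k (i+1) : ℚ) - (k i : ℚ))

/-- `w` has bounded width: its graphic lies between two parallel lines with
rational coefficients. -/
def BoundedWidth (w : ℕ → Bool) : Prop :=
  ∃ a b₁ b₂ : ℚ, ∀ n : ℕ,
    a * n + b₁ ≤ (graphic w n : ℚ) ∧ (graphic w n : ℚ) ≤ a * n + b₂

/-- The `n`-th block `(01)^{2^n} 0` of the word
`w = 01 0 0101 0 (01)⁴ 0 ⋯ (01)^{2^n} 0 ⋯`. -/
def padBlock (n : ℕ) : List Bool :=
  (List.replicate (2 ^ n) [false, true]).flatten ++ [false]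


namespace FreqAux

def sStart (n : ℕ) : ℕ := 2^(n+1) - 2 + n

lemma flatten_getD : ∀ k l, l < 2*k →
    ((List.replicate k ([false,true])).flatten.getD l false) = decide (l % 2 = 1) := by
  intro k
  induction k with
  | zero => omega
  | succ k ih =>
    intro l hl
    rw [List.replicate_succ, List.flatten_cons]
    match l with
    | 0 => rfl
    | 1 => rfl
    | (l+2) =>
      have : l < 2*k := by omega
      simpa [Nat.add_mod_right] using ih l this

lemma padBlock_getD (n l : ℕ) (hl : l < 2^(n+1)+1) :
    (padBlock n).getD l false = decide (l % 2 = 1) := by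
  have hlen : ((List.replicate (2^n) ([false,true] : List Bool)).flatten).length = 2 * 2^n := by
    simp [List.length_flatten, List.map_replicate, Nat.mul_comm]
  have h2 : (2:ℕ)^(n+1) = 2 * 2^n := by ring
  rcases Nat.lt_or_ge l (2 * 2^n) with h | h
  · rw [padBlock, List.getD_append _ _ _ _ (by omega), flatten_getD _ _ h]
  · have hl' : l = 2 * 2^n := by omega
    rw [padBlock, List.getD_eq_getElem?_getD, List.getElem?_append_right (by omega), hlen, hl']
    simp [Nat.mul_mod_right]

lemma ones_succ (w : ℕ → Bool) (m : ℕ) :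
    ones w (m+1) = ones w m + (if w m then 1 else 0) := by
  unfold ones
  rw [Finset.range_add_one, Finset.filter_insert]
  by_cases h : w m <;> simp [h, Finset.card_insert_of_notMem]

lemma ones_le (w : ℕ → Bool) (m : ℕ) : ones w m ≤ m := by
  simpa [ones] using (Finset.card_filter_le (Finset.range m) _)

lemma aux1 : ∀ d, 3 ≤ d → 2*d+1 ≤ 2^d := by
  intro d hd
  induction d with
  | zero => omega
  | succ d ih =>
    rcases Nat.lt_or_ge d 3 with h | h
    · interval_cases d <;> omega
    · have := ih (by omega)
      have h2 : (2:ℕ)^(d+1) = 2 * 2^d := by ring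
      omega

lemma sq_bound : ∀ d : ℕ, d*d ≤ 2^d + 8 := by
  intro d
  induction d with
  | zero => simp
  | succ d ih =>
    rcases Nat.lt_or_ge d 3 with h | h
    · interval_cases d <;> simp
    · have := aux1 d h
      have h2 : (2:ℕ)^(d+1) = 2 * 2^d := by ring
      nlinarith

section main
variable (w : ℕ → Bool)
  (hw : ∀ n l : ℕ, l < 2 ^ (n + 1) + 1 →
    w (2 ^ (n + 1) - 2 + n + l) = (padBlock n).getD l false)
include hw

lemma w_val (n l : ℕ) (hl : l < 2^(n+1)+1) :
    w (sStart n + l) = decide (l % 2 = 1) := by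
  rw [sStart, hw n l hl, padBlock_getD n l hl]

lemma ones_block (n : ℕ) (hbase : ones w (sStart n) = 2^n - 1) :
    ∀ l, l ≤ 2^(n+1)+1 → ones w (sStart n + l) = 2^n - 1 + l/2 := by
  intro l
  induction l with
  | zero => simpa using hbase
  | succ l ih =>
    intro hl
    have hval := w_val w hw n l (by omega)
    rw [← Nat.add_assoc, ones_succ, ih (by omega), hval]
    rcases Nat.mod_two_eq_zero_or_one l with h | h <;> simp [h] <;> omega

omit hw in
lemma sStart_succ (n : ℕ) : sStart (n+1) = sStart n + (2^(n+1)+1) := by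
  have h2 : (2:ℕ)^(n+2) = 2 * 2^(n+1) := by ring
  have h3 : (2:ℕ) ≤ 2^(n+1) := Nat.one_lt_two_pow (by omega)
  simp only [sStart]; omega

lemma ones_sStart : ∀ n, ones w (sStart n) = 2^n - 1 := by
  intro n
  induction n with
  | zero => simp [ones, sStart]
  | succ n ih =>
    rw [sStart_succ, ones_block w hw n ih _ (le_refl _)]
    have h2 : (2:ℕ)^(n+1) = 2 * 2^n := by ring
    have h3 : (1:ℕ) ≤ 2^n := Nat.one_le_two_pow
    omega

omit hw in
lemma cover : ∀ N, ∃ n l, l ≤ 2^(n+1) ∧ N = sStart n + l := by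
  intro N
  induction N with
  | zero => exact ⟨0, 0, by omega, by simp [sStart]⟩
  | succ N ih =>
    obtain ⟨n, l, hl, rfl⟩ := ih
    rcases Nat.lt_or_ge l (2^(n+1)) with h | h
    · exact ⟨n, l+1, by omega, by omega⟩
    · refine ⟨n+1, 0, by omega, ?_⟩
      rw [sStart_succ]; omega

lemma key (N : ℕ) : ∃ m, 2 * ones w N + m = N ∧ m*m ≤ N + 10 ∧ N ≤ 2^(m+2) + m := by
  obtain ⟨n, l, hl, rfl⟩ := cover N
  refine ⟨n + l % 2, ?_, ?_, ?_⟩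
  all_goals
    have hone := ones_block w hw n (ones_sStart w hw n) l (by omega)
    have h2 : (2:ℕ)^(n+1) = 2 * 2^n := by ring
    have h3 : (1:ℕ) ≤ 2^n := Nat.one_le_two_pow
    simp only [sStart] at hone ⊢
  · omega
  · have hm : (n + l % 2) * (n + l % 2) ≤ (n+1)*(n+1) :=
      Nat.mul_le_mul (by omega) (by omega)
    have := sq_bound (n+1)
    omega
  · have h4 : (2:ℕ)^(n+2) ≤ 2^(n + l % 2 + 2) := Nat.pow_le_pow_right (by omega) (by omega)
    have h5 : (2:ℕ)^(n+2) = 4 * 2^n := by ring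
    omega
end main

lemma tend0 : Tendsto (fun N : ℕ => Real.sqrt (N+10)/(2*N)) atTop (𝓝 0) := by
  have h : Tendsto (fun N : ℕ => (11:ℝ)/N) atTop (𝓝 0) :=
    tendsto_const_div_atTop_nhds_zero_nat 11
  have hs : Tendsto (fun N : ℕ => (1/2) * Real.sqrt (11/N)) atTop (𝓝 0) := by
    have := ((Real.continuous_sqrt.tendsto 0).comp h).const_mul (1/2 : ℝ)
    simpa using this
  apply squeeze_zero' (Eventually.of_forall fun N => by positivity) _ hs
  filter_upwards [eventually_ge_atTop 1] with N hN
  have hN0 : (0:ℝ) < N := by exact_mod_cast hN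
  have hN1 : (1:ℝ) ≤ N := by exact_mod_cast hN
  have h1 : Real.sqrt ((N:ℝ)+10) ≤ Real.sqrt (11*N) := by
    apply Real.sqrt_le_sqrt; linarith
  have h2 : Real.sqrt ((11:ℝ)*N) / (2*N) = 1/2 * Real.sqrt (11/N) := by
    rw [show (11:ℝ)/N = (11*N)/(N^2) by field_simp,
      Real.sqrt_div (by positivity), Real.sqrt_sq hN0.le]
    field_simp
  rw [← h2]
  gcongr

lemma ones_tendsto (w : ℕ → Bool)
    (hk : ∀ N, ∃ m, 2 * ones w N + m = N ∧ m*m ≤ N + 10 ∧ N ≤ 2^(m+2) + m) :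
    Tendsto (fun n => (ones w n : ℝ) / n) atTop (𝓝 (1 / 2)) := by
  rw [tendsto_iff_dist_tendsto_zero]
  apply squeeze_zero' (Eventually.of_forall fun N => dist_nonneg) _ tend0
  filter_upwards [eventually_ge_atTop 1] with N hN
  obtain ⟨m, h1, h2, _⟩ := hk N
  have hN0 : (0:ℝ) < N := by exact_mod_cast hN
  have hm2 : (m:ℝ)*m ≤ (N:ℝ)+10 := by exact_mod_cast h2
  have hm : (m:ℝ) ≤ Real.sqrt ((N:ℝ)+10) :=
    calc (m:ℝ) = Real.sqrt ((m:ℝ)*(m:ℝ)) := (Real.sqrt_mul_self (by positivity)).symm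
    _ ≤ _ := Real.sqrt_le_sqrt hm2
  have h1' : 2*(ones w N:ℝ) + m = N := by exact_mod_cast h1
  have : (ones w N:ℝ)/N - 1/2 = -((m:ℝ)/(2*N)) := by
    field_simp
    linear_combination h1'
  rw [Real.dist_eq, this, abs_neg, abs_of_nonneg (by positivity)]
  gcongr

lemma zeros_tendsto (w : ℕ → Bool)
    (ho : Tendsto (fun n => (ones w n : ℝ) / n) atTop (𝓝 (1 / 2))) :
    Tendsto (fun n => (zeros w n : ℝ) / n) atTop (𝓝 (1 / 2)) := by
  have h2 : Tendsto (fun n : ℕ => 1 - (ones w n : ℝ) / n) atTop (𝓝 (1/2)) := by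
    have := Tendsto.sub (tendsto_const_nhds : Tendsto (fun _ : ℕ => (1:ℝ)) atTop (𝓝 1)) ho
    norm_num at this ⊢; exact this
  apply h2.congr'
  filter_upwards [eventually_ge_atTop 1] with N hN
  have hN0 : (0:ℝ) < N := by exact_mod_cast hN
  have : (zeros w N : ℝ) = N - ones w N := by
    rw [zeros, Nat.cast_sub (ones_le w N)]
  rw [this]; field_simp

lemma not_wap (w : ℕ → Bool)
    (hk : ∀ N, ∃ m, 2 * ones w N + m = N ∧ m*m ≤ N + 10 ∧ N ≤ 2^(m+2) + m)
    (ho : Tendsto (fun n => (ones w n : ℝ) / n) atTop (𝓝 (1 / 2))) :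
    ¬ WAP w := by
  rintro ⟨ρ, k, hmono, heq⟩
  have hki : ∀ i, i ≤ k i := fun i => hmono.le_apply
  have hktop : Tendsto k atTop atTop :=
    tendsto_atTop_mono hki tendsto_id
  have htel : ∀ i, (ones w (k i) : ℚ) = ones w (k 0) + ρ * ((k i : ℚ) - k 0) := by
    intro i
    induction i with
    | zero => ring
    | succ i ih =>
      linear_combination heq i + ih
  have hrtop : Tendsto (fun i => (k i : ℝ)) atTop atTop :=
    tendsto_natCast_atTop_atTop.comp hktop
  have hA : Tendsto (fun i => (ones w (k i) : ℝ) / (k i)) atTop (𝓝 (1/2)) :=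
    ho.comp hktop
  have hB : Tendsto (fun i => (ones w (k i) : ℝ) / (k i)) atTop (𝓝 ρ) := by
    have hC : Tendsto (fun i => (ρ:ℝ) + ((ones w (k 0) : ℝ) - ρ * k 0) / (k i))
        atTop (𝓝 ((ρ:ℝ) + 0)) :=
      tendsto_const_nhds.add (tendsto_const_nhds.div_atTop hrtop)
    rw [add_zero] at hC
    apply hC.congr'
    filter_upwards [eventually_ge_atTop 1] with i hi
    have hk0 : (0:ℝ) < k i := by
      have := hki i; exact_mod_cast (by omega : 0 < k i)
    have := htel i
    have hrr : (ones w (k i) : ℝ) = ones w (k 0) + (ρ:ℝ) * ((k i : ℝ) - k 0) := by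
      exact_mod_cast this
    field_simp [hrr]; ring
    linear_combination -hrr
  have hrho : (ρ:ℝ) = 1/2 := tendsto_nhds_unique hB hA
  have hrhoQ : ρ = 1/2 := by
    apply Rat.cast_injective (α := ℝ)
    rw [hrho]; norm_num
  subst hrhoQ
  have hconst : ∀ i, (k i : ℚ) - 2 * ones w (k i) = (k 0 : ℚ) - 2 * ones w (k 0) := by
    intro i
    induction i with
    | zero => rfl
    | succ i ih =>
      have := heq i
      rw [← ih]; linarith
  obtain ⟨m0, hm0, _, hb0⟩ := hk (k 0)
  have hbig : ∀ i, k i ≤ 2^(m0+2) + m0 := by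
    intro i
    obtain ⟨m, hm, _, hb⟩ := hk (k i)
    have hq : (m:ℚ) = m0 := by
      have h1 : (2:ℚ) * ones w (k i) + m = k i := by exact_mod_cast hm
      have h2 : (2:ℚ) * ones w (k 0) + m0 = k 0 := by exact_mod_cast hm0
      have h3 := hconst i
      linarith
    have hmm : m = m0 := by exact_mod_cast hq
    exact hmm ▸ hb
  have := hbig (2^(m0+2) + m0 + 1)
  have := hki (2^(m0+2) + m0 + 1)
  omega

end FreqAux

/-- The word `w = 01 0 0101 0 (01)⁴ 0 ⋯ (01)^{2^n} 0 ⋯` (block `n` starts at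
position `2^{n+1} - 2 + n`) has letter frequencies `ρ₀ = ρ₁ = 1/2`, but is not
weakly abelian periodic. -/

theorem frequencies_half_not_WAP (w : ℕ → Bool)
    (hw : ∀ n l : ℕ, l < 2 ^ (n + 1) + 1 →
      w (2 ^ (n + 1) - 2 + n + l) = (padBlock n).getD l false) :
    Tendsto (fun n => (zeros w n : ℝ) / n) atTop (𝓝 (1 / 2)) ∧
    Tendsto (fun n => (ones w n : ℝ) / n) atTop (𝓝 (1 / 2)) ∧
    ¬ WAP w := by
  have hk := FreqAux.key w hw
  have ho := FreqAux.ones_tendsto w hk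
  exact ⟨FreqAux.zeros_tendsto w ho, ho, FreqAux.not_wap w hk ho⟩
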